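/- If α is a left-computable real number that is not computable, then there is no computable nonincreasing sequence of computable real numbers converging to α. Equivalently: if there exist both a computable nondecreasing sequence converging to α and a computable nonincreasing sequence converging to α, then α is computable. -/

import Mathlib

open Filter Topology

/-- A computable sequence of rational numbers. -/
def CompRatSeq (r : ℕ → ℚ) : Prop :=
  ∃ a b s : ℕ → ℕ, Computable a ∧ Computable b ∧ Computable s ∧
    (∀ n, b n ≠ 0) ∧ ∀ n, r n = (-1) ^ (s n) * (a n : ℚ) / (b n : ℚ)

/-- A computable double sequence of rational numbers. -/
def CompRatSeq2 (r : ℕ → ℕ → ℚ) : Prop :=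
  ∃ a b s : ℕ → ℕ → ℕ, Computable₂ a ∧ Computable₂ b ∧ Computable₂ s ∧
    (∀ n m, b n m ≠ 0) ∧ ∀ n m, r n m = (-1) ^ (s n m) * (a n m : ℚ) / (b n m : ℚ)

/-- `x` is a computable real: effectively approximable by a computable rational
sequence with a computable modulus of convergence. -/
def ComputableReal (x : ℝ) : Prop :=
  ∃ r : ℕ → ℚ, CompRatSeq r ∧ ∃ e : ℕ → ℕ, Computable e ∧
    ∀ M n : ℕ, e M ≤ n → |x - (r n : ℝ)| < 2 ^ (-(M : ℤ))

/-- A computable sequence of (computable) real numbers: uniformly effectively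
approximable by a computable double sequence of rationals. -/
def ComputableRealSeq (x : ℕ → ℝ) : Prop :=
  ∃ r : ℕ → ℕ → ℚ, CompRatSeq2 r ∧ ∃ e : ℕ → ℕ → ℕ, Computable₂ e ∧
    ∀ n M m : ℕ, e n M ≤ m → |x n - (r n m : ℝ)| < 2 ^ (-(M : ℤ))

theorem computable_nat_find {p : ℕ → ℕ → Bool} (hp : Computable₂ p)
    (H : ∀ M, ∃ n, p M n = true) :
    Computable fun M => Nat.find (H M) := by
  refine (Partrec.rfind hp.partrec₂).of_eq_tot fun M => ?_
  refine Nat.mem_rfind.2 ⟨?_, fun {m} hm => ?_⟩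
  · exact Part.mem_some_iff.2 (Nat.find_spec (H M)).symm
  · exact Part.mem_some_iff.2 (by simpa using Nat.find_min (H M) hm)

theorem key_ineq (z1 z2 b1 b2 : ℝ) (h1 : 0 < b1) (h2 : 0 < b2) (k : ℕ) :
    z2 / b2 - z1 / b1 ≤ 2 ^ (-(k : ℤ)) ↔ z2 * b1 * 2 ^ k ≤ z1 * b2 * 2 ^ k + b1 * b2 := by
  have hk : (0:ℝ) < 2 ^ k := by positivity
  rw [div_sub_div _ _ h2.ne' h1.ne', div_le_iff₀ (mul_pos h2 h1), zpow_neg, zpow_natCast,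
    inv_mul_eq_div, le_div_iff₀ hk]
  constructor <;> intro h <;> nlinarith

theorem cond_iff (s1 a1 b1 s2 a2 b2 k : ℕ) (hb1 : b1 ≠ 0) (hb2 : b2 ≠ 0) :
    ((cond (decide (s2 % 2 = 0))
      (cond (decide (s1 % 2 = 0))
        (decide (a2 * b1 * 2 ^ k ≤ a1 * b2 * 2 ^ k + b1 * b2))
        (decide (a2 * b1 * 2 ^ k + a1 * b2 * 2 ^ k ≤ b1 * b2)))
      (cond (decide (s1 % 2 = 0)) true
        (decide (a1 * b2 * 2 ^ k ≤ a2 * b1 * 2 ^ k + b1 * b2)))) = true)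
    ↔ ((-1 : ℝ) ^ s2 * a2 / b2 - (-1 : ℝ) ^ s1 * a1 / b1 ≤ 2 ^ (-(k : ℤ))) := by
  have h1 : (0:ℝ) < b1 := by exact_mod_cast Nat.pos_of_ne_zero hb1
  have h2 : (0:ℝ) < b2 := by exact_mod_cast Nat.pos_of_ne_zero hb2
  rcases Nat.even_or_odd s1 with e1 | o1 <;> rcases Nat.even_or_odd s2 with e2 | o2
  · have hreal : (-1 : ℝ) ^ s2 * a2 / b2 - (-1 : ℝ) ^ s1 * a1 / b1
        = (a2:ℝ) / b2 - (a1:ℝ) / b1 := by rw [e1.neg_one_pow, e2.neg_one_pow]; ring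
    rw [hreal, key_ineq _ _ _ _ h1 h2 k]
    simp only [Nat.even_iff.1 e1, Nat.even_iff.1 e2, decide_true, cond_true, decide_eq_true_eq]
    exact_mod_cast Iff.rfl
  · have hreal : (-1 : ℝ) ^ s2 * a2 / b2 - (-1 : ℝ) ^ s1 * a1 / b1
        = (-(a2:ℝ)) / b2 - (a1:ℝ) / b1 := by rw [e1.neg_one_pow, o2.neg_one_pow]; ring
    simp only [Nat.even_iff.1 e1, Nat.odd_iff.1 o2, decide_true, cond_true,
      show ¬(1 = 0) by norm_num, decide_false, cond_false, hreal]
    simp only [true_iff]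
    have ha : (0:ℝ) ≤ (a2:ℝ)/b2 := by positivity
    have hb : (0:ℝ) ≤ (a1:ℝ)/b1 := by positivity
    have hc : (0:ℝ) < 2 ^ (-(k:ℤ)) := by positivity
    rw [neg_div]
    linarith
  · have hreal : (-1 : ℝ) ^ s2 * a2 / b2 - (-1 : ℝ) ^ s1 * a1 / b1
        = (a2:ℝ) / b2 - (-(a1:ℝ)) / b1 := by rw [o1.neg_one_pow, e2.neg_one_pow]; ring
    rw [hreal, key_ineq _ _ _ _ h1 h2 k]
    simp only [Nat.odd_iff.1 o1, Nat.even_iff.1 e2, decide_true, cond_true,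
      show ¬(1 = 0) by norm_num, decide_false, cond_false, decide_eq_true_eq]
    constructor
    · intro h
      have h' : (a2:ℝ)*b1*2^k + (a1:ℝ)*b2*2^k ≤ (b1:ℝ)*b2 := by exact_mod_cast h
      linarith
    · intro h
      have h' : (a2:ℝ)*b1*2^k + (a1:ℝ)*b2*2^k ≤ (b1:ℝ)*b2 := by linarith
      exact_mod_cast h'
  · have hreal : (-1 : ℝ) ^ s2 * a2 / b2 - (-1 : ℝ) ^ s1 * a1 / b1
        = (-(a2:ℝ)) / b2 - (-(a1:ℝ)) / b1 := by rw [o1.neg_one_pow, o2.neg_one_pow]; ring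
    rw [hreal, key_ineq _ _ _ _ h1 h2 k]
    simp only [Nat.odd_iff.1 o1, Nat.odd_iff.1 o2, show ¬(1 = 0) by norm_num,
      decide_false, cond_false, decide_eq_true_eq]
    constructor
    · intro h
      have h' : (a1:ℝ)*b2*2^k ≤ (a2:ℝ)*b1*2^k + (b1:ℝ)*b2 := by exact_mod_cast h
      linarith
    · intro h
      have h' : (a1:ℝ)*b2*2^k ≤ (a2:ℝ)*b1*2^k + (b1:ℝ)*b2 := by linarith
      exact_mod_cast h'

theorem pow_half_step (k : ℕ) :
    (2:ℝ) ^ (-((k+1:ℕ):ℤ)) + (2:ℝ) ^ (-((k+1:ℕ):ℤ)) = 2 ^ (-(k:ℤ)) := by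
  rw [← two_mul, show (-((k+1:ℕ):ℤ)) = -(k:ℤ) + (-1) by push_cast; ring,
    zpow_add₀ (two_ne_zero), zpow_neg_one]
  ring

theorem pow_anti {i j : ℕ} (h : i ≤ j) : (2:ℝ) ^ (-(j:ℤ)) ≤ 2 ^ (-(i:ℤ)) :=
  zpow_le_zpow_right₀ one_le_two (by exact_mod_cast Int.neg_le_neg (by exact_mod_cast h))

/-- `Δ₁ = Σ₁ ∩ Π₁`: if there exist both a computable nondecreasing sequence of
computable reals converging to `α` and a computable nonincreasing one, then `α`
is computable.  Equivalently, for a left-computable non-computable `α` there is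
no computable nonincreasing sequence of computable reals converging to `α`. -/
theorem computable_of_incr_and_decr_approx (α : ℝ)
    (hup : ∃ x : ℕ → ℝ, ComputableRealSeq x ∧ Monotone x ∧ Tendsto x atTop (𝓝 α))
    (hdown : ∃ y : ℕ → ℝ, ComputableRealSeq y ∧ Antitone y ∧ Tendsto y atTop (𝓝 α)) :
    ComputableReal α := by
  obtain ⟨x, ⟨r, ⟨a1, b1, s1, ha1, hb1, hs1, hb1ne, hr⟩, e, he, hre⟩, hmono, hxlim⟩ := hup
  obtain ⟨y, ⟨q, ⟨a2, b2, s2, ha2, hb2, hs2, hb2ne, hq⟩, f, hf, hqf⟩, hanti, hylim⟩ := hdown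
  have hxle : ∀ n, x n ≤ α := fun n => hmono.ge_of_tendsto hxlim n
  have hyge : ∀ n, α ≤ y n := fun n => hanti.le_of_tendsto hylim n
  -- rational-cast values
  have hrcast : ∀ n m, ((r n m : ℚ) : ℝ)
      = (-1 : ℝ) ^ (s1 n m) * (a1 n m : ℝ) / (b1 n m : ℝ) := by
    intro n m; rw [hr]; push_cast; ring
  have hqcast : ∀ n m, ((q n m : ℚ) : ℝ)
      = (-1 : ℝ) ^ (s2 n m) * (a2 n m : ℝ) / (b2 n m : ℝ) := by
    intro n m; rw [hq]; push_cast; ring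
  -- the search predicate
  obtain ⟨P, hPdef⟩ : ∃ P : ℕ → ℕ → Bool, ∀ M n, P M n =
      (cond (decide (s2 n (f n (M+3)) % 2 = 0))
        (cond (decide (s1 n (e n (M+3)) % 2 = 0))
          (decide (a2 n (f n (M+3)) * b1 n (e n (M+3)) * 2 ^ (M+1) ≤
            a1 n (e n (M+3)) * b2 n (f n (M+3)) * 2 ^ (M+1) +
              b1 n (e n (M+3)) * b2 n (f n (M+3))))
          (decide (a2 n (f n (M+3)) * b1 n (e n (M+3)) * 2 ^ (M+1) +
            a1 n (e n (M+3)) * b2 n (f n (M+3)) * 2 ^ (M+1) ≤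
              b1 n (e n (M+3)) * b2 n (f n (M+3)))))
        (cond (decide (s1 n (e n (M+3)) % 2 = 0)) true
          (decide (a1 n (e n (M+3)) * b2 n (f n (M+3)) * 2 ^ (M+1) ≤
            a2 n (f n (M+3)) * b1 n (e n (M+3)) * 2 ^ (M+1) +
              b1 n (e n (M+3)) * b2 n (f n (M+3)))))) :=
    ⟨_, fun _ _ => rfl⟩
  -- P M n ↔ the real inequality
  have hPiff : ∀ M n, P M n = true ↔
      ((q n (f n (M+3)) : ℝ) - (r n (e n (M+3)) : ℝ) ≤ 2 ^ (-((M+1:ℕ):ℤ))) := by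
    intro M n
    rw [hPdef, hqcast, hrcast]
    exact cond_iff _ _ _ _ _ _ (M+1) (hb1ne _ _) (hb2ne _ _)
  -- approximation bounds at precision M+3
  have hrb : ∀ M n, |x n - (r n (e n (M+3)) : ℝ)| < 2 ^ (-((M+3:ℕ):ℤ)) :=
    fun M n => hre n (M+3) _ le_rfl
  have hqb : ∀ M n, |y n - (q n (f n (M+3)) : ℝ)| < 2 ^ (-((M+3:ℕ):ℤ)) :=
    fun M n => hqf n (M+3) _ le_rfl
  -- existence of a good index
  have hex : ∀ M, ∃ n, P M n = true := by
    intro M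
    have hsub : Tendsto (fun n => y n - x n) atTop (𝓝 0) := by
      simpa using hylim.sub hxlim
    have hev : ∀ᶠ n in atTop, y n - x n < 2 ^ (-((M+2:ℕ):ℤ)) :=
      (tendsto_order.1 hsub).2 _ (by positivity)
    obtain ⟨n, hn⟩ := hev.exists
    refine ⟨n, (hPiff M n).2 ?_⟩
    have h1 := abs_lt.1 (hrb M n)
    have h2 := abs_lt.1 (hqb M n)
    have hs1' := pow_half_step (M+2)
    have hs2' := pow_half_step (M+1)
    have e32 : ((M+3:ℕ):ℤ) = ((M+2)+1:ℕ) := by push_cast; ring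
    have e21 : ((M+2:ℕ):ℤ) = ((M+1)+1:ℕ) := by push_cast; ring
    rw [e32] at h1 h2
    linarith [hs1', hs2', h1.1, h1.2, h2.1, h2.2]
  -- the search function
  set N : ℕ → ℕ := fun M => Nat.find (hex M) with hNdef
  have hPN : ∀ M, P M (N M) = true := fun M => Nat.find_spec (hex M)
  -- error bound for the output sequence
  have hbound : ∀ M : ℕ, |α - (r (N M) (e (N M) (M+3)) : ℝ)| < 2 ^ (-(M:ℤ)) := by
    intro M
    have hP := (hPiff M (N M)).1 (hPN M)
    have h1 := abs_lt.1 (hrb M (N M))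
    have h2 := abs_lt.1 (hqb M (N M))
    have hs1' := pow_half_step (M+2)
    have hs2' := pow_half_step M
    have hs3' := pow_half_step (M+1)
    have e32 : ((M+3:ℕ):ℤ) = ((M+2)+1:ℕ) := by push_cast; ring
    have e21 : ((M+2:ℕ):ℤ) = ((M+1)+1:ℕ) := by push_cast; ring
    have e10 : ((M+1:ℕ):ℤ) = (M+1:ℕ) := rfl
    rw [e32] at h1 h2
    have hx := hxle (N M)
    have hy := hyge (N M)
    have hpos : (0:ℝ) < 2 ^ (-(((M+2)+1:ℕ)):ℤ) := by positivity
    rw [abs_lt]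
    constructor <;> [skip; skip] <;> rw [show ((M:ℕ):ℤ) = ((M:ℕ):ℤ) from rfl] <;>
      linarith [hs1', hs2', hs3', h1.1, h1.2, h2.1, h2.2, hpos]
  -- computability of the pieces
  have hplus3 : Computable fun p : ℕ × ℕ => p.1 + 3 :=
    (Primrec.nat_add.comp Primrec.fst (Primrec.const 3)).to_comp
  have hE : Computable fun p : ℕ × ℕ => e p.2 (p.1 + 3) := he.comp Computable.snd hplus3
  have hF : Computable fun p : ℕ × ℕ => f p.2 (p.1 + 3) := hf.comp Computable.snd hplus3
  have hA1 : Computable fun p : ℕ × ℕ => a1 p.2 (e p.2 (p.1 + 3)) := ha1.comp Computable.snd hE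
  have hB1 : Computable fun p : ℕ × ℕ => b1 p.2 (e p.2 (p.1 + 3)) := hb1.comp Computable.snd hE
  have hS1 : Computable fun p : ℕ × ℕ => s1 p.2 (e p.2 (p.1 + 3)) := hs1.comp Computable.snd hE
  have hA2 : Computable fun p : ℕ × ℕ => a2 p.2 (f p.2 (p.1 + 3)) := ha2.comp Computable.snd hF
  have hB2 : Computable fun p : ℕ × ℕ => b2 p.2 (f p.2 (p.1 + 3)) := hb2.comp Computable.snd hF
  have hS2 : Computable fun p : ℕ × ℕ => s2 p.2 (f p.2 (p.1 + 3)) := hs2.comp Computable.snd hF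
  have hmul : Computable₂ ((· * ·) : ℕ → ℕ → ℕ) := Primrec.nat_mul.to_comp
  have hadd : Computable₂ ((· + ·) : ℕ → ℕ → ℕ) := Primrec.nat_add.to_comp
  have hpow : Computable fun p : ℕ × ℕ => 2 ^ (p.1 + 1) :=
    ((Primrec₂.unpaired'.1 Nat.Primrec.pow).comp (Primrec.const 2)
      (Primrec.nat_add.comp Primrec.fst (Primrec.const 1))).to_comp
  have hle : Computable₂ fun m n : ℕ => decide (m ≤ n) := Primrec.nat_le.decide.to_comp
  have heq : Computable₂ fun m n : ℕ => decide (m = n) := Primrec.eq.decide.to_comp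
  have hmod : Computable₂ ((· % ·) : ℕ → ℕ → ℕ) := Primrec.nat_mod.to_comp
  have hpar1 : Computable fun p : ℕ × ℕ => decide (s1 p.2 (e p.2 (p.1 + 3)) % 2 = 0) :=
    heq.comp (hmod.comp hS1 (Computable.const 2)) (Computable.const 0)
  have hpar2 : Computable fun p : ℕ × ℕ => decide (s2 p.2 (f p.2 (p.1 + 3)) % 2 = 0) :=
    heq.comp (hmod.comp hS2 (Computable.const 2)) (Computable.const 0)
  have hX : Computable fun p : ℕ × ℕ =>
      a2 p.2 (f p.2 (p.1 + 3)) * b1 p.2 (e p.2 (p.1 + 3)) * 2 ^ (p.1 + 1) :=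
    hmul.comp (hmul.comp hA2 hB1) hpow
  have hY : Computable fun p : ℕ × ℕ =>
      a1 p.2 (e p.2 (p.1 + 3)) * b2 p.2 (f p.2 (p.1 + 3)) * 2 ^ (p.1 + 1) :=
    hmul.comp (hmul.comp hA1 hB2) hpow
  have hC : Computable fun p : ℕ × ℕ =>
      b1 p.2 (e p.2 (p.1 + 3)) * b2 p.2 (f p.2 (p.1 + 3)) :=
    hmul.comp hB1 hB2
  have hPc : Computable₂ P := by
    have : Computable fun p : ℕ × ℕ => P p.1 p.2 := by
      refine Computable.of_eq ?_ fun p => (hPdef p.1 p.2).symm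
      exact Computable.cond hpar2
        (Computable.cond hpar1
          (hle.comp hX (hadd.comp hY hC))
          (hle.comp (hadd.comp hX hY) hC))
        (Computable.cond hpar1 (Computable.const true)
          (hle.comp hY (hadd.comp hX hC)))
    exact this
  have hN : Computable N := computable_nat_find hPc hex
  have hplus3' : Computable fun M : ℕ => M + 3 :=
    (Primrec.nat_add.comp Primrec.id (Primrec.const 3)).to_comp
  have hEN : Computable fun M => e (N M) (M + 3) := he.comp hN hplus3'
  have haa : Computable fun M => a1 (N M) (e (N M) (M + 3)) := ha1.comp hN hEN
  have hbb : Computable fun M => b1 (N M) (e (N M) (M + 3)) := hb1.comp hN hEN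
  have hss : Computable fun M => s1 (N M) (e (N M) (M + 3)) := hs1.comp hN hEN
  refine ⟨fun M => r (N M) (e (N M) (M+3)),
    ⟨fun M => a1 (N M) (e (N M) (M+3)), fun M => b1 (N M) (e (N M) (M+3)),
      fun M => s1 (N M) (e (N M) (M+3)), haa, hbb, hss,
      fun M => hb1ne _ _, fun M => hr _ _⟩,
    id, Computable.id, ?_⟩
  intro M n hMn
  calc |α - (r (N n) (e (N n) (n+3)) : ℝ)| < 2 ^ (-(n:ℤ)) := hbound n
    _ ≤ 2 ^ (-(M:ℤ)) := pow_anti hMn
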